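/- arXiv:2510.10855 — 3 statements merged into one kernel-verified Lean document; each statement's English description precedes it below -/
import Mathlib

section
/- There exists an absolute constant c > 0 such that for all integers x ≥ 1 and y ≥ 3, the number of positive integers m ≤ x all of whose prime factors divide y is strictly less than exp(c · log(max(x, y)) / log log y). -/
open Finset Real

private lemma geom_bound {r : ℝ} (h0 : 0 ≤ r) (h1 : r < 1) (n : ℕ) :
    ∑ j ∈ Finset.range n, r ^ j ≤ (1 - r)⁻¹ := by
  have h2 : (0:ℝ) < 1 - r := by linarith
  rw [geom_sum_eq (by linarith : r ≠ 1), div_le_iff_of_neg (by linarith : r - 1 < 0)]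
  have : (0:ℝ) ≤ r ^ n := pow_nonneg h0 n
  have h3 : (1 - r)⁻¹ * (1 - r) = 1 := inv_mul_cancel₀ (ne_of_gt h2)
  nlinarith

private lemma sum_bound (x : ℕ) (σ : ℝ) (hσ : 0 < σ) :
    ∀ P : Finset ℕ, (∀ p ∈ P, p.Prime) →
      ∑ m ∈ (Finset.Icc 1 x).filter (fun m => m.primeFactors ⊆ P), (m : ℝ) ^ (-σ) ≤
        ∏ p ∈ P, (1 - (p : ℝ) ^ (-σ))⁻¹ := by
  intro P
  induction P using Finset.induction_on with
  | empty =>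
    intro _
    have hsub : (Finset.Icc 1 x).filter (fun m => m.primeFactors ⊆ (∅ : Finset ℕ)) ⊆ {1} := by
      intro m hm
      simp only [Finset.mem_filter, Finset.mem_Icc, Finset.subset_empty] at hm
      have := (Nat.primeFactors_eq_empty).mp hm.2
      simp only [Finset.mem_singleton]
      omega
    calc ∑ m ∈ (Finset.Icc 1 x).filter (fun m => m.primeFactors ⊆ (∅ : Finset ℕ)), (m : ℝ) ^ (-σ)
        ≤ ∑ m ∈ ({1} : Finset ℕ), (m : ℝ) ^ (-σ) :=
          Finset.sum_le_sum_of_subset_of_nonneg hsub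
            (fun i _ _ => Real.rpow_nonneg (Nat.cast_nonneg i) _)
      _ = 1 := by simp
      _ = ∏ p ∈ (∅ : Finset ℕ), (1 - (p : ℝ) ^ (-σ))⁻¹ := by simp
  | @insert q P' hq ih =>
    intro hP
    have hq' : q.Prime := hP q (Finset.mem_insert_self q P')
    have hq2 : 2 ≤ q := hq'.two_le
    have hP' : ∀ p ∈ P', p.Prime := fun p hp => hP p (Finset.mem_insert_of_mem hp)
    set S := (Finset.Icc 1 x).filter (fun m => m.primeFactors ⊆ insert q P') with hS
    set S' := (Finset.Icc 1 x).filter (fun m => m.primeFactors ⊆ P') with hS'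
    set ψ : ℕ → ℕ × ℕ := fun m => (m.factorization q, m / q ^ m.factorization q) with hψ
    have hmem : ∀ m ∈ S, ψ m ∈ (Finset.range (x + 1)) ×ˢ S' := by
      intro m hm
      simp only [hS, Finset.mem_filter, Finset.mem_Icc] at hm
      obtain ⟨⟨hm1, hmx⟩, hsub⟩ := hm
      have hm0 : m ≠ 0 := by omega
      have hdvd : q ^ m.factorization q ∣ m := Nat.ordProj_dvd m q
      have hqm : q ^ m.factorization q ≤ m := Nat.le_of_dvd (by omega) hdvd
      have hj2 : m.factorization q < 2 ^ m.factorization q := Nat.lt_two_pow_self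
      have hj3 : 2 ^ m.factorization q ≤ q ^ m.factorization q :=
        Nat.pow_le_pow_left hq2 _
      have hm'pos : 0 < m / q ^ m.factorization q := Nat.ordCompl_pos q hm0
      have hm'dvd : m / q ^ m.factorization q ∣ m := Nat.ordCompl_dvd m q
      simp only [Finset.mem_product, Finset.mem_range, hS', Finset.mem_filter, Finset.mem_Icc, hψ]
      refine ⟨by omega, ⟨by omega, Nat.le_trans (Nat.div_le_self m _) hmx⟩, ?_⟩
      intro p hp
      have hpp := Nat.prime_of_mem_primeFactors hp
      have hpd : p ∣ m / q ^ m.factorization q := Nat.dvd_of_mem_primeFactors hp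
      have hpm : p ∣ m := hpd.trans hm'dvd
      have : p ∈ insert q P' := hsub (Nat.mem_primeFactors.mpr ⟨hpp, hpm, hm0⟩)
      rcases Finset.mem_insert.mp this with h | h
      · exact absurd (h ▸ hpd) (Nat.not_dvd_ordCompl hq' hm0)
      · exact h
    have hinj : ∀ m₁ ∈ S, ∀ m₂ ∈ S, ψ m₁ = ψ m₂ → m₁ = m₂ := by
      intro m₁ _ m₂ _ h
      simp only [hψ, Prod.mk.injEq] at h
      have e₁ := Nat.ordProj_mul_ordCompl_eq_self m₁ q
      have e₂ := Nat.ordProj_mul_ordCompl_eq_self m₂ q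
      calc m₁ = q ^ m₁.factorization q * (m₁ / q ^ m₁.factorization q) := e₁.symm
        _ = q ^ m₂.factorization q * (m₂ / q ^ m₂.factorization q) :=
            congrArg₂ (fun a b => q ^ a * b) h.1 h.2
        _ = m₂ := e₂
    have hval : ∀ m ∈ S, (m : ℝ) ^ (-σ) =
        ((q : ℝ) ^ (-σ)) ^ (m.factorization q) * ((m / q ^ m.factorization q : ℕ) : ℝ) ^ (-σ) := by
      intro m hm
      have hfact : q ^ m.factorization q * (m / q ^ m.factorization q) = m :=
        Nat.ordProj_mul_ordCompl_eq_self m q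
      have hqnn : (0 : ℝ) ≤ (q : ℝ) := Nat.cast_nonneg q
      conv_lhs => rw [← hfact]
      push_cast
      rw [Real.mul_rpow (pow_nonneg hqnn _) (Nat.cast_nonneg _)]
      congr 1
      rw [← Real.rpow_natCast (q : ℝ) (m.factorization q), ← Real.rpow_mul hqnn,
        mul_comm, Real.rpow_mul hqnn, Real.rpow_natCast]
    have hu0 : (0 : ℝ) ≤ (q : ℝ) ^ (-σ) := Real.rpow_nonneg (Nat.cast_nonneg q) _
    have hu1 : (q : ℝ) ^ (-σ) < 1 :=
      Real.rpow_lt_one_of_one_lt_of_neg (by exact_mod_cast hq2.trans_lt' one_lt_two) (by linarith)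
    have hgnn : ∀ b : ℕ × ℕ, 0 ≤ ((q : ℝ) ^ (-σ)) ^ b.1 * ((b.2 : ℕ) : ℝ) ^ (-σ) :=
      fun b => mul_nonneg (pow_nonneg hu0 _) (Real.rpow_nonneg (Nat.cast_nonneg _) _)
    calc ∑ m ∈ S, (m : ℝ) ^ (-σ)
        = ∑ m ∈ S, (((q : ℝ) ^ (-σ)) ^ (ψ m).1 * (((ψ m).2 : ℕ) : ℝ) ^ (-σ)) :=
          Finset.sum_congr rfl hval
      _ = ∑ b ∈ S.image ψ, ((q : ℝ) ^ (-σ)) ^ b.1 * ((b.2 : ℕ) : ℝ) ^ (-σ) :=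
          by rw [Finset.sum_image hinj]
      _ ≤ ∑ b ∈ (Finset.range (x + 1)) ×ˢ S', ((q : ℝ) ^ (-σ)) ^ b.1 * ((b.2 : ℕ) : ℝ) ^ (-σ) :=
          Finset.sum_le_sum_of_subset_of_nonneg
            (Finset.image_subset_iff.mpr hmem) (fun b _ _ => hgnn b)
      _ = (∑ j ∈ Finset.range (x + 1), ((q : ℝ) ^ (-σ)) ^ j) * ∑ m' ∈ S', (m' : ℝ) ^ (-σ) := by
          rw [Finset.sum_product, Finset.sum_mul_sum]
      _ ≤ (1 - (q : ℝ) ^ (-σ))⁻¹ * ∏ p ∈ P', (1 - (p : ℝ) ^ (-σ))⁻¹ := by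
          refine mul_le_mul (geom_bound hu0 hu1 _) (ih hP')
            (Finset.sum_nonneg fun i _ => Real.rpow_nonneg (Nat.cast_nonneg i) _)
            (inv_nonneg.mpr (by linarith))
      _ = ∏ p ∈ insert q P', (1 - (p : ℝ) ^ (-σ))⁻¹ := by rw [Finset.prod_insert hq]

set_option maxHeartbeats 2000000 in
theorem stmt7 : ∃ c : ℝ, 0 < c ∧
    ∀ x y : ℕ, 1 ≤ x → 3 ≤ y →
      (Nat.card {m : ℕ // 1 ≤ m ∧ m ≤ x ∧ ∀ p : ℕ, p.Prime → p ∣ m → p ∣ y} : ℝ)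
        < Real.exp (c * Real.log (max x y : ℕ) / Real.log (Real.log y)) := by
  classical
  refine ⟨100, by norm_num, ?_⟩
  intro x y hx hy
  have hy0 : y ≠ 0 := by omega
  set X : ℕ := max x y with hXdef
  have hX3 : 3 ≤ X := le_trans hy (le_max_right x y)
  set L : ℝ := Real.log X with hLdef
  set μ : ℝ := Real.log y with hmudef
  set lam : ℝ := Real.log μ with hlamdef
  have he3 : Real.exp 1 < 3 := lt_of_lt_of_le Real.exp_one_lt_d9 (by norm_num)
  have hy3 : (3:ℝ) ≤ (y:ℝ) := by exact_mod_cast hy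
  have hμ1 : 1 < μ := by
    have h1 : Real.log (Real.exp 1) < Real.log 3 := Real.log_lt_log (Real.exp_pos 1) he3
    rw [Real.log_exp] at h1
    exact lt_of_lt_of_le h1 (Real.log_le_log (by norm_num) hy3)
  have hμ0 : 0 < μ := by linarith
  have hlam0 : 0 < lam := Real.log_pos hμ1
  have hμL : μ ≤ L := Real.log_le_log (by positivity) (by exact_mod_cast le_max_right x y)
  have hL1 : 1 < L := lt_of_lt_of_le hμ1 hμL
  have hexpμ : Real.exp lam = μ := Real.exp_log hμ0
  -- cardinality as a Finset card
  set S : Finset ℕ := (Finset.Icc 1 x).filter (fun m => m.primeFactors ⊆ y.primeFactors)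
    with hSdef
  have hcard : Nat.card {m : ℕ // 1 ≤ m ∧ m ≤ x ∧ ∀ p : ℕ, p.Prime → p ∣ m → p ∣ y}
      = S.card := by
    rw [← Nat.card_eq_finsetCard S]
    refine Nat.card_congr (Equiv.subtypeEquivRight fun m => ?_)
    simp only [hSdef, Finset.mem_filter, Finset.mem_Icc]
    constructor
    · rintro ⟨h1, h2, h3⟩
      refine ⟨⟨h1, h2⟩, fun p hp => ?_⟩
      obtain ⟨pp, pd, -⟩ := Nat.mem_primeFactors.mp hp
      exact Nat.mem_primeFactors.mpr ⟨pp, h3 p pp pd, hy0⟩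
    · rintro ⟨⟨h1, h2⟩, h3⟩
      refine ⟨h1, h2, fun p pp pd => ?_⟩
      exact Nat.dvd_of_mem_primeFactors
        (h3 (Nat.mem_primeFactors.mpr ⟨pp, pd, by omega⟩))
  rw [hcard]
  rcases le_or_gt lam 1 with hlam1 | hlam1
  · -- small y case : trivial bound by x
    have hSx : (S.card : ℝ) ≤ (X : ℝ) := by
      have h1 : S.card ≤ (Finset.Icc 1 x).card := Finset.card_filter_le _ _
      have h2 : (Finset.Icc 1 x).card = x := by rw [Nat.card_Icc]; omega
      have h3 : x ≤ X := le_max_left x y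
      have : S.card ≤ X := by omega
      exact_mod_cast this
    have hXL : (X : ℝ) = Real.exp L := (Real.exp_log (by positivity)).symm
    have hlt : L < 100 * L / lam := by
      rw [lt_div_iff₀ hlam0]
      nlinarith
    calc (S.card : ℝ) ≤ (X : ℝ) := hSx
      _ = Real.exp L := hXL
      _ < Real.exp (100 * L / lam) := Real.exp_lt_exp.mpr hlt
  · -- main case
    set σ : ℝ := 1 / lam with hσdef
    have hσ0 : 0 < σ := by positivity
    set P : Finset ℕ := y.primeFactors with hPdef
    have hPprime : ∀ p ∈ P, p.Prime := fun p hp => Nat.prime_of_mem_primeFactors hp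
    -- Rankin step
    have hrank : (S.card : ℝ) ≤ (x : ℝ) ^ σ * ∏ p ∈ P, (1 - (p : ℝ) ^ (-σ))⁻¹ := by
      have h2 : ∀ m ∈ S, (1:ℝ) ≤ (x : ℝ) ^ σ * (m : ℝ) ^ (-σ) := by
        intro m hm
        simp only [hSdef, Finset.mem_filter, Finset.mem_Icc] at hm
        have hm1 : 1 ≤ m := hm.1.1
        have hmx : m ≤ x := hm.1.2
        have hm0 : (0:ℝ) < (m:ℝ) := by exact_mod_cast hm1.trans_lt' Nat.zero_lt_one
        rw [Real.rpow_neg (le_of_lt hm0), ← div_eq_mul_inv,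
          one_le_div (Real.rpow_pos_of_pos hm0 σ)]
        exact Real.rpow_le_rpow (le_of_lt hm0) (by exact_mod_cast hmx) (le_of_lt hσ0)
      calc (S.card : ℝ) = ∑ _m ∈ S, (1:ℝ) := by simp
        _ ≤ ∑ m ∈ S, (x : ℝ) ^ σ * (m : ℝ) ^ (-σ) := Finset.sum_le_sum h2
        _ = (x : ℝ) ^ σ * ∑ m ∈ S, (m : ℝ) ^ (-σ) := by rw [Finset.mul_sum]
        _ ≤ (x : ℝ) ^ σ * ∏ p ∈ P, (1 - (p : ℝ) ^ (-σ))⁻¹ :=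
            mul_le_mul_of_nonneg_left
              (by rw [hSdef]; exact sum_bound x σ hσ0 P hPprime)
              (Real.rpow_nonneg (Nat.cast_nonneg x) σ)
    set N : ℕ := ⌊Real.exp (lam/2)⌋₊ with hNdef
    set E : ℝ := Real.exp (lam/2) with hEdef
    have hE0 : 0 < E := Real.exp_pos _
    have hE2 : E * E = μ := by rw [hEdef, ← Real.exp_add, ← hexpμ]; ring_nf
    have hE16 : lam ^ 2 ≤ 16 * E := by
      have h := Real.add_one_le_exp (lam/4)
      have h2 : Real.exp (lam/4) * Real.exp (lam/4) = E := by
        rw [hEdef, ← Real.exp_add]; ring_nf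
      nlinarith [Real.exp_pos (lam/4)]
    have hsplit : ∏ p ∈ P, (1 - (p : ℝ) ^ (-σ))⁻¹ =
        (∏ p ∈ P.filter (fun p => p ≤ N), (1 - (p : ℝ) ^ (-σ))⁻¹) *
        ∏ p ∈ P.filter (fun p => ¬ p ≤ N), (1 - (p : ℝ) ^ (-σ))⁻¹ :=
      (Finset.prod_filter_mul_prod_filter_not P _ _).symm
    have l2a : (0.693:ℝ) < Real.log 2 := by linarith [Real.log_two_gt_d9]
    have l2b : Real.log 2 < 0.694 := by linarith [Real.log_two_lt_d9]
    have hsmallf : ∀ p ∈ P, (1 - (p:ℝ)^(-σ))⁻¹ ≤ 3 * lam ∧ (0:ℝ) < 1 - (p:ℝ)^(-σ) := by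
      intro p hp
      have hp2 : 2 ≤ p := (hPprime p hp).two_le
      have hp2R : (2:ℝ) ≤ (p:ℝ) := by exact_mod_cast hp2
      have hppos : (0:ℝ) < p := by linarith
      set t : ℝ := σ * Real.log 2 with htdef
      have ht0 : 0 < t := mul_pos hσ0 (by linarith)
      have hu : (p:ℝ)^(-σ) ≤ (1 + t)⁻¹ := by
        rw [Real.rpow_def_of_pos hppos]
        have hlp : Real.log 2 ≤ Real.log p := Real.log_le_log (by norm_num) hp2R
        have h1 : Real.log p * (-σ) ≤ -t := by nlinarith
        calc Real.exp (Real.log p * (-σ)) ≤ Real.exp (-t) := Real.exp_le_exp.mpr h1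
          _ ≤ (1+t)⁻¹ := by
              rw [Real.exp_neg]
              exact inv_anti₀ (by linarith) (by linarith [Real.add_one_le_exp t])
      have htlam : t * lam = Real.log 2 := by rw [htdef, hσdef]; field_simp
      have htl : t < Real.log 2 := by nlinarith
      have h1t : (0:ℝ) < 1 + t := by linarith
      have h3l : (0:ℝ) < 3 * lam := by linarith
      have key : (1+t)⁻¹ + (3*lam)⁻¹ ≤ 1 := by
        rw [inv_eq_one_div, inv_eq_one_div,
          div_add_div _ _ (ne_of_gt h1t) (ne_of_gt h3l), div_le_one (by positivity)]
        nlinarith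
      have hupos : (0:ℝ) ≤ (p:ℝ)^(-σ) := Real.rpow_nonneg (le_of_lt hppos) _
      have hinv3 : (0:ℝ) < (3*lam)⁻¹ := by positivity
      have hpos : (0:ℝ) < 1 - (p:ℝ)^(-σ) := by linarith
      refine ⟨?_, hpos⟩
      have h1 : (3*lam)⁻¹ ≤ 1 - (p:ℝ)^(-σ) := by linarith
      calc (1 - (p:ℝ)^(-σ))⁻¹ ≤ ((3*lam)⁻¹)⁻¹ := inv_anti₀ hinv3 h1
        _ = 3 * lam := inv_inv _
    have hsmall : (∏ p ∈ P.filter (fun p => p ≤ N), (1 - (p : ℝ) ^ (-σ))⁻¹)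
        ≤ Real.exp (48 * μ / lam) := by
      set k₁ := (P.filter (fun p => p ≤ N)).card with hk1
      have hb : ∏ p ∈ P.filter (fun p => p ≤ N), (1 - (p : ℝ) ^ (-σ))⁻¹ ≤ (3*lam) ^ k₁ := by
        rw [hk1, ← Finset.prod_const]
        exact Finset.prod_le_prod
          (fun p hp => le_of_lt (inv_pos.mpr (hsmallf p (Finset.mem_filter.mp hp).1).2))
          (fun p hp => (hsmallf p (Finset.mem_filter.mp hp).1).1)
      have hk1E : (k₁ : ℝ) ≤ E := by
        have hsub : P.filter (fun p => p ≤ N) ⊆ Finset.Icc 1 N := by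
          intro p hp
          obtain ⟨hpP, hpN⟩ := Finset.mem_filter.mp hp
          exact Finset.mem_Icc.mpr ⟨(hPprime p hpP).pos, hpN⟩
        have hcc : k₁ ≤ N := by
          have := Finset.card_le_card hsub
          rw [Nat.card_Icc] at this
          omega
        calc (k₁:ℝ) ≤ (N:ℝ) := by exact_mod_cast hcc
          _ ≤ E := Nat.floor_le (le_of_lt hE0)
      have hlog3 : 0 ≤ Real.log (3*lam) := Real.log_nonneg (by linarith)
      have hlog3' : Real.log (3*lam) ≤ 3*lam := by
        linarith [Real.log_le_sub_one_of_pos (show (0:ℝ) < 3*lam by linarith)]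
      have h3E : Real.exp ((k₁:ℝ) * Real.log (3*lam)) = (3*lam) ^ k₁ := by
        rw [Real.exp_nat_mul, Real.exp_log (show (0:ℝ) < 3*lam by linarith)]
      have harith : (k₁:ℝ) * Real.log (3*lam) ≤ 48 * μ / lam := by
        have h1 : (k₁:ℝ) * Real.log (3*lam) ≤ E * (3*lam) :=
          mul_le_mul hk1E hlog3' hlog3 (le_of_lt hE0)
        have h2 : E * (3*lam) ≤ 48 * μ / lam := by
          rw [le_div_iff₀ hlam0]
          nlinarith [hE16, hE0, hE2]
        linarith
      calc ∏ p ∈ P.filter (fun p => p ≤ N), (1 - (p : ℝ) ^ (-σ))⁻¹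
          ≤ (3*lam) ^ k₁ := hb
        _ = Real.exp ((k₁:ℝ) * Real.log (3*lam)) := h3E.symm
        _ ≤ Real.exp (48 * μ / lam) := Real.exp_le_exp.mpr harith
    have hlogbig : ∀ p ∈ P.filter (fun p => ¬ p ≤ N), lam/2 ≤ Real.log p := by
      intro p hp
      obtain ⟨hpP, hpN⟩ := Finset.mem_filter.mp hp
      have hpE : E < (p:ℝ) := by
        have h1 : E < (N:ℝ) + 1 := Nat.lt_floor_add_one E
        have h2 : N + 1 ≤ p := by omega
        have h3 : ((N:ℝ) + 1) ≤ (p:ℝ) := by exact_mod_cast h2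
        linarith
      have := Real.log_le_log hE0 (le_of_lt hpE)
      rwa [hEdef, Real.log_exp] at this
    have hlargef : ∀ p ∈ P.filter (fun p => ¬ p ≤ N), (1 - (p:ℝ)^(-σ))⁻¹ ≤ 4 := by
      intro p hp
      obtain ⟨hpP, hpN⟩ := Finset.mem_filter.mp hp
      have hppos : (0:ℝ) < p := by exact_mod_cast (hPprime p hpP).pos
      have hlogp : lam/2 ≤ Real.log p := hlogbig p hp
      have hu : (p:ℝ)^(-σ) ≤ Real.exp (-(1/2)) := by
        rw [Real.rpow_def_of_pos hppos]
        apply Real.exp_le_exp.mpr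
        have hσl : 1/2 ≤ σ * Real.log p := by
          rw [hσdef, div_mul_eq_mul_div, le_div_iff₀ hlam0]
          linarith
        nlinarith
      have hexphalf : Real.exp (-(1/2)) ≤ 3/4 := by
        have h := Real.add_one_le_exp (1/2 : ℝ)
        have h43 : (4:ℝ)/3 ≤ Real.exp (1/2) := by linarith
        rw [Real.exp_neg]
        calc (Real.exp (1/2:ℝ))⁻¹ ≤ ((4:ℝ)/3)⁻¹ := inv_anti₀ (by norm_num) h43
          _ ≤ 3/4 := by norm_num
      have h1u : (1:ℝ)/4 ≤ 1 - (p:ℝ)^(-σ) := by linarith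
      calc (1 - (p:ℝ)^(-σ))⁻¹ ≤ ((1:ℝ)/4)⁻¹ := inv_anti₀ (by norm_num) h1u
        _ = 4 := by norm_num
    have hlarge : (∏ p ∈ P.filter (fun p => ¬ p ≤ N), (1 - (p:ℝ)^(-σ))⁻¹)
        ≤ Real.exp (4 * μ / lam) := by
      set k₂ := (P.filter (fun p => ¬ p ≤ N)).card with hk2
      have hb : ∏ p ∈ P.filter (fun p => ¬ p ≤ N), (1 - (p:ℝ)^(-σ))⁻¹ ≤ (4:ℝ) ^ k₂ := by
        rw [hk2, ← Finset.prod_const]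
        exact Finset.prod_le_prod
          (fun p hp => le_of_lt (inv_pos.mpr
            (hsmallf p (Finset.mem_filter.mp hp).1).2))
          hlargef
      have hcount : (k₂:ℝ) * (lam/2) ≤ μ := by
        have h1 : k₂ • (lam/2) ≤ ∑ p ∈ P.filter (fun p => ¬ p ≤ N), Real.log p :=
          Finset.card_nsmul_le_sum _ _ _ hlogbig
        rw [nsmul_eq_mul] at h1
        have h2 : ∑ p ∈ P.filter (fun p => ¬ p ≤ N), Real.log p ≤ ∑ p ∈ P, Real.log p :=
          Finset.sum_le_sum_of_subset_of_nonneg (Finset.filter_subset _ _)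
            (fun p hp _ => Real.log_nonneg (by exact_mod_cast (hPprime p hp).pos))
        have h3 : ∑ p ∈ P, Real.log p ≤ μ := by
          rw [← Real.log_prod (s := P) (f := fun p => (p:ℝ))
            (fun p hp => by simpa using (hPprime p hp).pos.ne')]
          rw [← Nat.cast_prod]
          apply Real.log_le_log
          · exact_mod_cast Finset.prod_pos (fun p hp => (hPprime p hp).pos)
          · exact_mod_cast Nat.le_of_dvd (by omega) (Nat.prod_primeFactors_dvd y)
        linarith
      have h4k : Real.exp ((k₂:ℝ) * Real.log 4) = (4:ℝ) ^ k₂ := by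
        rw [Real.exp_nat_mul, Real.exp_log (by norm_num : (0:ℝ) < 4)]
      have hlog4 : Real.log 4 ≤ 2 := by
        have h4 : (4:ℝ) = 2^2 := by norm_num
        rw [h4, Real.log_pow]
        push_cast
        linarith
      have harith : (k₂:ℝ) * Real.log 4 ≤ 4 * μ / lam := by
        have hk2nn : (0:ℝ) ≤ (k₂:ℝ) := Nat.cast_nonneg _
        have hlog4nn : (0:ℝ) ≤ Real.log 4 := Real.log_nonneg (by norm_num)
        have h1 : (k₂:ℝ) * Real.log 4 ≤ (k₂:ℝ) * 2 :=
          mul_le_mul_of_nonneg_left hlog4 hk2nn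
        have h2 : (k₂:ℝ) * 2 ≤ 4 * μ / lam := by
          rw [le_div_iff₀ hlam0]
          nlinarith
        linarith
      calc ∏ p ∈ P.filter (fun p => ¬ p ≤ N), (1 - (p:ℝ)^(-σ))⁻¹
          ≤ (4:ℝ) ^ k₂ := hb
        _ = Real.exp ((k₂:ℝ) * Real.log 4) := h4k.symm
        _ ≤ Real.exp (4 * μ / lam) := Real.exp_le_exp.mpr harith
    have hxσ : (x:ℝ)^σ ≤ Real.exp (L / lam) := by
      have hx0 : (0:ℝ) < x := by exact_mod_cast hx
      rw [Real.rpow_def_of_pos hx0]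
      apply Real.exp_le_exp.mpr
      have h1 : Real.log x ≤ L :=
        Real.log_le_log hx0 (by exact_mod_cast le_max_left x y)
      calc Real.log x * σ ≤ L * σ :=
            mul_le_mul_of_nonneg_right h1 (le_of_lt hσ0)
        _ = L / lam := by rw [hσdef]; ring
    have hsnn : (0:ℝ) ≤ ∏ p ∈ P.filter (fun p => p ≤ N), (1 - (p : ℝ) ^ (-σ))⁻¹ :=
      Finset.prod_nonneg fun p hp =>
        le_of_lt (inv_pos.mpr (hsmallf p (Finset.mem_filter.mp hp).1).2)
    have hfinal : (S.card:ℝ) ≤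
        Real.exp (L/lam) * (Real.exp (48*μ/lam) * Real.exp (4*μ/lam)) := by
      refine le_trans hrank ?_
      rw [hsplit]
      refine mul_le_mul hxσ
        (mul_le_mul hsmall hlarge
          (Finset.prod_nonneg fun p hp =>
            le_of_lt (inv_pos.mpr (hsmallf p (Finset.mem_filter.mp hp).1).2))
          (le_of_lt (Real.exp_pos _)))
        (mul_nonneg hsnn
          (Finset.prod_nonneg fun p hp =>
            le_of_lt (inv_pos.mpr (hsmallf p (Finset.mem_filter.mp hp).1).2)))
        (le_of_lt (Real.exp_pos _))
    rw [← Real.exp_add, ← Real.exp_add] at hfinal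
    refine lt_of_le_of_lt hfinal (Real.exp_lt_exp.mpr ?_)
    have heq : L/lam + (48*μ/lam + 4*μ/lam) = (L + 52*μ)/lam := by ring
    rw [heq, div_lt_div_iff₀ hlam0 hlam0]
    nlinarith
end

section
/- For any nonzero integers α, β, J, the set of pairs (x, y) of nonzero integers such that αx + βy = J and the pair (x, y) is multiplicatively dependent is finite. -/
/-- If `m^a = n^b` with positive exponents, one of `m, n` divides the other. -/
lemma pow_eq_pow_dvd (m n a b : ℕ) (ha : 0 < a) (hb : 0 < b) (h : m ^ a = n ^ b) :
    m ∣ n ∨ n ∣ m := by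
  rcases le_total a b with hab | hab
  · right
    have : n ^ b ∣ m ^ b := h ▸ pow_dvd_pow m hab
    exact (Nat.pow_dvd_pow_iff hb.ne').mp this
  · left
    have : m ^ a ∣ n ^ a := h ▸ pow_dvd_pow n hab
    exact (Nat.pow_dvd_pow_iff ha.ne').mp this

lemma aux_dvd (m n : ℕ) (hm : m ≠ 0) (hn : n ≠ 0) (a : ℕ) (k : ℤ)
    (hak : ¬(a = 0 ∧ k = 0)) (h : (m : ℚ) ^ a * (n : ℚ) ^ k = 1) :
    n ∣ m ∨ m ∣ n := by
  have hmQ : (m : ℚ) ≠ 0 := Nat.cast_ne_zero.mpr hm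
  have hnQ : (n : ℚ) ≠ 0 := Nat.cast_ne_zero.mpr hn
  rcases le_or_gt 0 k with hk | hk
  · -- both exponents nonneg
    set b := k.toNat with hbdef
    have hkb : k = (b : ℤ) := (Int.toNat_of_nonneg hk).symm
    rw [hkb, zpow_natCast] at h
    have hNat : m ^ a * n ^ b = 1 := by exact_mod_cast h
    have hma : m ^ a = 1 := Nat.eq_one_of_dvd_one ⟨n ^ b, hNat.symm⟩
    have hnb : n ^ b = 1 := Nat.eq_one_of_dvd_one ⟨m ^ a, by rw [mul_comm]; exact hNat.symm⟩
    rcases Nat.eq_zero_or_pos a with ha | ha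
    · have hb : b ≠ 0 := by
        intro hb0
        exact hak ⟨ha, by omega⟩
      have : n = 1 := (pow_eq_one_iff_left hb).mp hnb
      exact Or.inl (this ▸ one_dvd m)
    · have : m = 1 := (pow_eq_one_iff_left ha.ne').mp hma
      exact Or.inr (this ▸ one_dvd n)
  · -- k negative : m^a = n^b
    set b := (-k).toNat with hbdef
    have hb : 0 < b := by omega
    have hkb : k = -(b : ℤ) := by omega
    rw [hkb, zpow_neg, zpow_natCast] at h
    have hQ : (m : ℚ) ^ a = (n : ℚ) ^ b := by
      field_simp at h
      linarith [h]
    have hNat : m ^ a = n ^ b := by exact_mod_cast hQ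
    rcases Nat.eq_zero_or_pos a with ha | ha
    · have : n = 1 := (pow_eq_one_iff_left hb.ne').mp (by simpa [ha] using hNat.symm)
      exact Or.inl (this ▸ one_dvd m)
    · rcases pow_eq_pow_dvd m n a b ha hb hNat with h' | h'
      · exact Or.inr h'
      · exact Or.inl h' 

/-- Multiplicative dependence forces divisibility one way or the other. -/
lemma multdep_dvd (x y : ℤ) (hx : x ≠ 0) (hy : y ≠ 0) (k₁ k₂ : ℤ)
    (hk : (k₁, k₂) ≠ (0, 0)) (h : (x : ℚ) ^ k₁ * (y : ℚ) ^ k₂ = 1) :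
    y ∣ x ∨ x ∣ y := by
  set m := x.natAbs with hmdef
  set n := y.natAbs with hndef
  have hm : m ≠ 0 := Int.natAbs_ne_zero.mpr hx
  have hn : n ≠ 0 := Int.natAbs_ne_zero.mpr hy
  have hxq : ((m : ℚ)) = |(x : ℚ)| := by
    rw [hmdef, Nat.cast_natAbs, Int.cast_abs]
  have hyq : ((n : ℚ)) = |(y : ℚ)| := by
    rw [hndef, Nat.cast_natAbs, Int.cast_abs]
  have habsz : ∀ (a : ℚ) (k : ℤ), |a ^ k| = |a| ^ k := fun a k =>
    map_zpow₀ (absHom : ℚ →*₀ ℚ) a k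
  have habs : (m : ℚ) ^ k₁ * (n : ℚ) ^ k₂ = 1 := by
    have h2 := congrArg abs h
    rwa [abs_mul, habsz, habsz, abs_one, ← hxq, ← hyq] at h2
  have hk' : ¬(k₁ = 0 ∧ k₂ = 0) := by
    intro ⟨h1, h2⟩
    exact hk (by simp [h1, h2])
  have key : n ∣ m ∨ m ∣ n := by
    rcases le_or_gt 0 k₁ with h1 | h1
    · obtain ⟨a, ha⟩ : ∃ a : ℕ, k₁ = (a : ℤ) := ⟨k₁.toNat, by omega⟩
      rw [ha, zpow_natCast] at habs
      refine aux_dvd m n hm hn a k₂ ?_ habs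
      intro ⟨h2, h3⟩; exact hk' ⟨by omega, h3⟩
    · have habs' : (m : ℚ) ^ (-k₁) * (n : ℚ) ^ (-k₂) = 1 := by
        rw [zpow_neg, zpow_neg, ← mul_inv, habs, inv_one]
      obtain ⟨a, ha⟩ : ∃ a : ℕ, -k₁ = (a : ℤ) := ⟨(-k₁).toNat, by omega⟩
      rw [ha, zpow_natCast] at habs'
      refine aux_dvd m n hm hn a (-k₂) ?_ habs'
      intro ⟨h2, h3⟩; omega
  rcases key with hd | hd
  · exact Or.inl (Int.natAbs_dvd_natAbs.mp hd)
  · exact Or.inr (Int.natAbs_dvd_natAbs.mp hd)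

/-- The bound coming from the line equation when `y ∣ x`. -/
lemma line_bound (α β J x y : ℤ) (hα : α ≠ 0) (hJ : J ≠ 0) (hy : y ≠ 0)
    (hdvd : y ∣ x) (hline : α * x + β * y = J) :
    |x| ≤ |J| * (|J| + |β|) ∧ |y| ≤ |J| := by
  obtain ⟨c, rfl⟩ := hdvd
  have hJeq : y * (α * c + β) = J := by rw [← hline]; ring
  have hy1 : 1 ≤ |y| := Int.one_le_abs hy
  have habs : |y| * |α * c + β| = |J| := by rw [← abs_mul, hJeq]
  have hJpos : 0 < |J| := abs_pos.mpr hJ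
  have hyJ : |y| ≤ |J| := Int.le_of_dvd hJpos (dvd_abs y J |>.mpr ⟨α * c + β, hJeq.symm⟩ |> (abs_dvd y |J|).mpr)
  have hfac : |α * c + β| ≤ |J| := by nlinarith [abs_nonneg (α * c + β)]
  have hαc : |c| ≤ |J| + |β| := by
    have h1 : |α * c| ≤ |α * c + β| + |β| := by
      have h3 := abs_sub (α * c + β) β
      rw [add_sub_cancel_right] at h3
      exact h3
    have h2 : |c| ≤ |α * c| := by
      rw [abs_mul]
      nlinarith [Int.one_le_abs hα, abs_nonneg c]
    linarith
  constructor
  · have : |y * c| = |y| * |c| := abs_mul y c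
    rw [this]
    have h0 : (0:ℤ) ≤ |c| := abs_nonneg c
    calc |y| * |c| ≤ |J| * |c| := by nlinarith
      _ ≤ |J| * (|J| + |β|) := by nlinarith
  · exact hyJ

theorem stmt8 (α β J : ℤ) (hα : α ≠ 0) (hβ : β ≠ 0) (hJ : J ≠ 0) :
    {p : ℤ × ℤ | p.1 ≠ 0 ∧ p.2 ≠ 0 ∧ α * p.1 + β * p.2 = J ∧
      ∃ k₁ k₂ : ℤ, (k₁, k₂) ≠ (0, 0) ∧ (p.1 : ℚ) ^ k₁ * (p.2 : ℚ) ^ k₂ = 1}.Finite := by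
  set B := |J| * (|J| + |α| + |β|) with hBdef
  have hα1 : 1 ≤ |α| := Int.one_le_abs hα
  have hβ1 : 1 ≤ |β| := Int.one_le_abs hβ
  have hJpos : 0 < |J| := abs_pos.mpr hJ
  apply Set.Finite.subset ((Set.finite_Icc (-B) B).prod (Set.finite_Icc (-B) B))
  rintro ⟨x, y⟩ ⟨hx, hy, hline, k₁, k₂, hk, hdep⟩
  have hd := multdep_dvd x y hx hy k₁ k₂ hk hdep
  have hbnd : |x| ≤ B ∧ |y| ≤ B := by
    rcases hd with hd | hd
    · obtain ⟨h1, h2⟩ := line_bound α β J x y hα hJ hy hd hline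
      constructor <;> nlinarith
    · obtain ⟨h1, h2⟩ := line_bound β α J y x hβ hJ hx hd (by linarith)
      constructor <;> nlinarith
  obtain ⟨hbx, hby⟩ := hbnd
  rw [abs_le] at hbx hby
  exact ⟨⟨hbx.1, hbx.2⟩, ⟨hby.1, hby.2⟩⟩
end

section
/- For every integer N > 16 that is not divisible by 6, there exist positive integers a < b < c with a + b + c = N and nonzero integers p, q, r such that a^p · b^q · c^r = 1, where the product is taken in ℚ with integer (possibly negative) exponents. -/
theorem stmt19 (N : ℕ) (hN : 16 < N) (h6 : ¬ (6 ∣ N)) :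
    ∃ a b c : ℕ, 0 < a ∧ a < b ∧ b < c ∧ a + b + c = N ∧
      ∃ p q r : ℤ, p ≠ 0 ∧ q ≠ 0 ∧ r ≠ 0 ∧ (a : ℚ) ^ p * (b : ℚ) ^ q * (c : ℚ) ^ r = 1 := by
  have h3 : N % 3 = 0 ∨ N % 3 = 1 ∨ N % 3 = 2 := by omega
  rcases h3 with h3 | h3 | h3
  · -- N ≡ 0 mod 3, so N ≡ 3 mod 6, N odd
    rcases Nat.even_or_odd N with he | ho
    · exfalso; rcases he with ⟨t, ht⟩; omega
    have h4 : N % 4 = 1 ∨ N % 4 = 3 := by omega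
    rcases h4 with h4 | h4
    · -- N ≡ 1 mod 4, N ≡ 9 mod 12
      by_cases h21 : N = 21
      · refine ⟨1, 4, 16, by norm_num, by norm_num, by norm_num, by omega, 1, 2, -1, by norm_num,
          by norm_num, by norm_num, by norm_num⟩
      by_cases h33 : N = 33
      · refine ⟨6, 9, 18, by norm_num, by norm_num, by norm_num, by omega, -2, -1, 2, by norm_num,
          by norm_num, by norm_num, by norm_num⟩
      by_cases h45 : N = 45
      · refine ⟨6, 12, 27, by norm_num, by norm_num, by norm_num, by omega, -6, 3, 1, by norm_num,
          by norm_num, by norm_num, by norm_num⟩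
      -- now N ≥ 57, use (9, k, 3k) with k = (N-9)/4 ≥ 12
      set k := (N - 9) / 4 with hk
      have hk12 : 12 ≤ k := by omega
      refine ⟨9, k, 3 * k, by norm_num, by omega, by omega, by omega, -1, -2, 2, by norm_num,
        by norm_num, by norm_num, ?_⟩
      have hkQ : (k : ℚ) ≠ 0 := Nat.cast_ne_zero.mpr (by omega)
      push_cast
      rw [zpow_neg, zpow_neg, zpow_one]
      rw [show (2:ℤ) = ((2:ℕ):ℤ) by norm_num, zpow_natCast, zpow_natCast]
      field_simp
      ring
    · -- N ≡ 3 mod 4: (3, k, 3k)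
      set k := (N - 3) / 4 with hk
      have hk4 : 4 ≤ k := by omega
      refine ⟨3, k, 3 * k, by norm_num, by omega, by omega, by omega, 1, 1, -1, by norm_num,
        by norm_num, by norm_num, ?_⟩
      have hkQ : (k : ℚ) ≠ 0 := Nat.cast_ne_zero.mpr (by omega)
      push_cast
      rw [zpow_neg]
      field_simp
  · -- N ≡ 1 mod 3: (4, k, 2k), k = (N-4)/3 ≥ 5
    set k := (N - 4) / 3 with hk
    have hk5 : 5 ≤ k := by omega
    refine ⟨4, k, 2 * k, by norm_num, by omega, by omega, by omega, 1, 2, -2, by norm_num,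
      by norm_num, by norm_num, ?_⟩
    have hkQ : (k : ℚ) ≠ 0 := Nat.cast_ne_zero.mpr (by omega)
    push_cast
    rw [zpow_neg]
    field_simp
    ring
  · -- N ≡ 2 mod 3: (2, k, 2k), k = (N-2)/3 ≥ 5
    set k := (N - 2) / 3 with hk
    have hk5 : 5 ≤ k := by omega
    refine ⟨2, k, 2 * k, by norm_num, by omega, by omega, by omega, 1, 1, -1, by norm_num,
      by norm_num, by norm_num, ?_⟩
    have hkQ : (k : ℚ) ≠ 0 := Nat.cast_ne_zero.mpr (by omega)
    push_cast
    rw [zpow_neg]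
    field_simp
end
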